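/- Let p ∈ 𝔻 \ {0}, let λ ∈ ℂ with |λ| = 1 and λp = conj(p), and let φ(z) = (az+b)/(cz+d) (a,b,c,d ∈ ℂ, ad−bc ≠ 0) be a linear fractional self-map of 𝔻. Set σ(z) = (conj(a)·z − conj(c))/(−conj(b)·z + conj(d)), g(z) = 1/(−conj(b)·z + conj(d)), h(z) = cz + d. If w ∈ 𝔻 satisfies conj(a)·w ≠ conj(c), then for all z ∈ 𝔻: (JW_{ξ_p,τ_p} C_φ* C_φ K_w)(z) = conj(ξ_p(conj(z))) · [ −conj(c)·(g(w)/σ(w))·K_{conj(φ(0))}(conj(τ_p(conj(z)))) + conj(h(1/conj(σ(w))))·g(w)·K_{conj(φ(σ(w)))}(conj(τ_p(conj(z)))) ]. -/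

import Mathlib

open scoped ComplexConjugate InnerProductSpace ENNReal NNReal
open Complex Metric

noncomputable section

abbrev H2 : Type := lp (fun _ : ℕ => ℂ) 2

namespace H2

/-- Evaluation of an element of `H²` (given by its sequence of Taylor coefficients)
at a point `z` of the unit disk: `f(z) = ∑ aₙ zⁿ`. -/
def eval (f : H2) (z : ℂ) : ℂ := ∑' n : ℕ, (f : ∀ _ : ℕ, ℂ) n * z ^ n

/-- The Szegő kernel function `K_w(z) = 1/(1 - conj w * z)`. -/
def ker (w z : ℂ) : ℂ := (1 - conj w * z)⁻¹

lemma kernel_memℓp (w : ℂ) (hw : ‖w‖ < 1) :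
    Memℓp (fun n : ℕ => (conj w) ^ n) 2 := by
  apply memℓp_gen
  have hsum : Summable (fun n : ℕ => (‖w‖ ^ 2) ^ n) :=
    summable_geometric_of_lt_one (by positivity) (by nlinarith [norm_nonneg w])
  refine hsum.congr fun n => ?_
  have h2 : ((2 : ℝ≥0∞).toReal) = ((2 : ℕ) : ℝ) := by simp
  rw [h2, Real.rpow_natCast]
  simp [norm_pow, ← pow_mul, Nat.mul_comm]

/-- The reproducing kernel of `H²` at `w` in the unit disk, as an element of `H²`. -/
def kernel (w : ℂ) : H2 :=
  if hw : ‖w‖ < 1 then ⟨fun n : ℕ => (conj w) ^ n, kernel_memℓp w hw⟩ else 0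

/-- `T` is the composition operator `C_φ` on `H²`. -/
def IsCompOp (φ : ℂ → ℂ) (T : H2 →L[ℂ] H2) : Prop :=
  ∀ f : H2, ∀ z : ℂ, ‖z‖ < 1 → eval (T f) z = eval f (φ z)

/-- `W` is the weighted composition operator `W_{ψ,φ}` on `H²`. -/
def IsWCompOp (ψ φ : ℂ → ℂ) (W : H2 →L[ℂ] H2) : Prop :=
  ∀ f : H2, ∀ z : ℂ, ‖z‖ < 1 → eval (W f) z = ψ z * eval f (φ z)

/-- A conjugation on `H²`: a conjugate-linear involution satisfying `⟪Cx, Cy⟫ = ⟪y, x⟫`. -/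
structure IsConjugation (C : H2 → H2) : Prop where
  map_add : ∀ x y : H2, C (x + y) = C x + C y
  map_smul : ∀ (c : ℂ) (x : H2), C (c • x) = conj c • C x
  invol : ∀ x : H2, C (C x) = x
  inner_conj : ∀ x y : H2, ⟪C x, C y⟫_ℂ = ⟪y, x⟫_ℂ

/-- `T` is `C`-normal: `C T* T C = T T*`. -/
def CNormal (C : H2 → H2) (T : H2 →L[ℂ] H2) : Prop :=
  ∀ x : H2, C ((ContinuousLinearMap.adjoint T) (T (C x)))
      = T ((ContinuousLinearMap.adjoint T) x)

/-- `T` is a normal operator: `T* T = T T*`. -/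
def IsNormalOp (T : H2 →L[ℂ] H2) : Prop :=
  (ContinuousLinearMap.adjoint T).comp T = T.comp (ContinuousLinearMap.adjoint T)

/-- `T` is a unitary operator. -/
def IsUnitaryOp (T : H2 →L[ℂ] H2) : Prop :=
  T.comp (ContinuousLinearMap.adjoint T) = ContinuousLinearMap.id ℂ H2 ∧
  (ContinuousLinearMap.adjoint T).comp T = ContinuousLinearMap.id ℂ H2

/-- `C` is the conjugation `J_μ` on `H²`: `(J_μ f)(z) = conj (f (μ * conj z))`. -/
def IsJmu (μ : ℂ) (C : H2 → H2) : Prop :=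
  ∀ f : H2, ∀ z : ℂ, ‖z‖ < 1 → eval (C f) z = conj (eval f (μ * conj z))

/-- `ξ_p(z) = √(1-|p|²) / (1 - conj p * z)`. -/
def xi (p z : ℂ) : ℂ := (Real.sqrt (1 - ‖p‖ ^ 2) : ℂ) / (1 - conj p * z)

/-- `τ_p(z) = λ (p - z) / (1 - conj p * z)`. -/
def tau (p lam z : ℂ) : ℂ := lam * (p - z) / (1 - conj p * z)

/-- `C` is the conjugation `J W_{ξ_p, τ_p}` on `H²`:
`(C f)(z) = conj (ξ_p(conj z) * f (τ_p (conj z)))`. -/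
def IsJW (p lam : ℂ) (C : H2 → H2) : Prop :=
  ∀ f : H2, ∀ z : ℂ, ‖z‖ < 1 →
    eval (C f) z = conj (xi p (conj z) * eval f (tau p lam (conj z)))

end H2


namespace H2

lemma summable_eval (f : H2) {z : ℂ} (hz : ‖z‖ < 1) :
    Summable (fun n : ℕ => (f : ∀ _ : ℕ, ℂ) n * z ^ n) := by
  apply Summable.of_norm
  have : Summable (fun n : ℕ => ‖f‖ * ‖z‖ ^ n) :=
    (summable_geometric_of_lt_one (norm_nonneg z) hz).mul_left _
  refine this.of_nonneg_of_le (fun n => norm_nonneg _) fun n => ?_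
  rw [norm_mul, norm_pow]
  gcongr
  exact lp.norm_apply_le_norm (by norm_num) f n

lemma eval_add (f g : H2) {z : ℂ} (hz : ‖z‖ < 1) :
    eval (f + g) z = eval f z + eval g z := by
  unfold eval
  rw [← Summable.tsum_add (summable_eval f hz) (summable_eval g hz)]
  apply tsum_congr; intro n
  rw [lp.coeFn_add]; simp; ring

lemma eval_smul (c : ℂ) (f : H2) (z : ℂ) :
    eval (c • f) z = c * eval f z := by
  unfold eval
  rw [← tsum_mul_left]
  apply tsum_congr; intro n
  rw [lp.coeFn_smul]; simp; ring

lemma kernel_apply {w : ℂ} (hw : ‖w‖ < 1) :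
    (kernel w : ∀ _ : ℕ, ℂ) = fun n => (conj w) ^ n := by
  rw [kernel, dif_pos hw]

lemma eval_kernel {w z : ℂ} (hw : ‖w‖ < 1) (hz : ‖z‖ < 1) :
    eval (kernel w) z = (1 - conj w * z)⁻¹ := by
  unfold eval
  rw [kernel_apply hw]
  have h : ‖conj w * z‖ < 1 := by
    rw [norm_mul, RCLike.norm_conj]
    nlinarith [norm_nonneg w, norm_nonneg z]
  rw [show (fun n : ℕ => (conj w)^n * z^n) = fun n : ℕ => (conj w * z)^n by
    funext n; rw [mul_pow]]
  exact tsum_geometric_of_norm_lt_one h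

lemma inner_kernel (f : H2) {z : ℂ} (hz : ‖z‖ < 1) :
    ⟪kernel z, f⟫_ℂ = eval f z := by
  rw [lp.inner_eq_tsum]
  unfold eval
  apply tsum_congr; intro n
  rw [kernel_apply hz]
  simp [RCLike.inner_apply, mul_comm]

lemma ext_of_eval {f g : H2} (h : ∀ z : ℂ, ‖z‖ < 1 → eval f z = eval g z) : f = g := by
  have key : ∀ (q : H2), (∀ z : ℂ, ‖z‖ < 1 → eval q z = 0) → q = 0 := by
    intro q hq
    set p := FormalMultilinearSeries.ofScalars ℂ (q : ∀ _ : ℕ, ℂ) with hp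
    have hball : HasFPowerSeriesOnBall (0 : ℂ → ℂ) p 0 ((1/2 : ℝ≥0) : ℝ≥0∞) := by
      refine ⟨?_, by norm_num, ?_⟩
      · apply p.le_radius_of_bound ‖q‖
        intro n
        rw [hp, FormalMultilinearSeries.ofScalars_norm]
        have h2 : ‖(q : ∀ _ : ℕ, ℂ) n‖ ≤ ‖q‖ := lp.norm_apply_le_norm (by norm_num) q n
        have h3 : ((1/2 : ℝ≥0) : ℝ) ^ n ≤ 1 := by
          apply pow_le_one₀ <;> norm_num
        nlinarith [norm_nonneg ((q : ∀ _ : ℕ, ℂ) n)]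
      · intro y hy
        have hy' : ‖y‖ < 1 := by
          rw [EMetric.mem_ball, edist_zero_right] at hy
          have h1 : (‖y‖₊ : ℝ≥0∞) < 1 := lt_trans hy (by norm_num)
          rw [ENNReal.coe_lt_one_iff] at h1
          exact_mod_cast h1
        have hs : HasSum (fun n : ℕ => (q : ∀ _ : ℕ, ℂ) n * y ^ n) 0 := by
          rw [Summable.hasSum_iff_tendsto_nat (summable_eval q hy')]
          have := (summable_eval q hy').hasSum
          rw [show (∑' n : ℕ, (q : ∀ _ : ℕ, ℂ) n * y ^ n) = 0 from hq y hy'] at this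
          exact this.tendsto_sum_nat
        have heq : (fun n : ℕ => p n fun _ => y) = fun n : ℕ => (q : ∀ _ : ℕ, ℂ) n * y ^ n := by
          funext n
          rw [hp, FormalMultilinearSeries.ofScalars_apply_eq]
          simp [smul_eq_mul]
        rw [heq]
        simpa using hs
    have hat : HasFPowerSeriesAt (0 : ℂ → ℂ) p 0 := ⟨_, hball⟩
    have hp0 : p = 0 := hat.eq_zero
    apply lp.ext
    funext n
    have h4 : p n = 0 := by rw [hp0]; rfl
    rw [hp] at h4
    have h5 := (FormalMultilinearSeries.ofScalars_eq_zero ℂ n).mp h4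
    simpa using h5
  have hfg := key (f - g) ?_
  · exact sub_eq_zero.mp hfg
  intro z hz
  have he : eval (f - g) z = eval f z - eval g z := by
    unfold eval
    rw [← Summable.tsum_sub (summable_eval f hz) (summable_eval g hz)]
    apply tsum_congr; intro n
    rw [lp.coeFn_sub]; simp; ring
  rw [he, h z hz, sub_self]

lemma adjoint_kernel {φ : ℂ → ℂ} {T : H2 →L[ℂ] H2} (hT : IsCompOp φ T)
    (hself : ∀ z : ℂ, ‖z‖ < 1 → ‖φ z‖ < 1) {v : ℂ} (hv : ‖v‖ < 1) :
    (ContinuousLinearMap.adjoint T) (kernel v) = kernel (φ v) := by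
  apply ext_inner_right ℂ
  intro f
  rw [ContinuousLinearMap.adjoint_inner_left, inner_kernel (T f) hv, hT f v hv,
    inner_kernel f (hself v hv)]

lemma normSq_lt_one {x : ℂ} (hx : ‖x‖ < 1) : Complex.normSq x < 1 := by
  rw [← Complex.sq_norm]
  nlinarith [norm_nonneg x]

lemma norm_lt_norm_den {p u : ℂ} (hp : ‖p‖ < 1) (hu : ‖u‖ < 1) :
    ‖p - u‖ < ‖1 - conj p * u‖ := by
  have h1 : Complex.normSq (1 - conj p * u) - Complex.normSq (p - u)
      = (1 - Complex.normSq p) * (1 - Complex.normSq u) := by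
    simp [Complex.normSq_apply, Complex.sub_re, Complex.sub_im, Complex.mul_re,
      Complex.mul_im, Complex.conj_re, Complex.conj_im]
    ring
  have hp2 := normSq_lt_one hp
  have hu2 := normSq_lt_one hu
  have h2 : Complex.normSq (p - u) < Complex.normSq (1 - conj p * u) := by nlinarith
  have e1 : ‖p - u‖ ^ 2 = Complex.normSq (p - u) := Complex.sq_norm _
  have e2 : ‖1 - conj p * u‖ ^ 2 = Complex.normSq (1 - conj p * u) := Complex.sq_norm _
  nlinarith [norm_nonneg (p - u), norm_nonneg (1 - conj p * u)]

lemma one_sub_ne {p u : ℂ} (hp : ‖p‖ < 1) (hu : ‖u‖ < 1) : 1 - conj p * u ≠ 0 := by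
  intro h
  have hn : ‖conj p * u‖ < 1 := by
    rw [norm_mul, RCLike.norm_conj]
    nlinarith [norm_nonneg p, norm_nonneg u]
  rw [sub_eq_zero] at h
  rw [← h] at hn
  simp at hn

lemma norm_tau_lt_one {p lam u : ℂ} (hp : ‖p‖ < 1) (hlam : ‖lam‖ = 1) (hu : ‖u‖ < 1) :
    ‖lam * (p - u) / (1 - conj p * u)‖ < 1 := by
  rw [norm_div, norm_mul, hlam, one_mul, div_lt_one]
  · exact norm_lt_norm_den hp hu
  · have := norm_lt_norm_den hp hu
    have := norm_nonneg (p - u)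
    linarith

lemma eps_helper {A B C m : ℝ} (hA : 0 ≤ A) (hB : 0 ≤ B) (hC : 0 < C) (hm : 0 < m)
    (H : ∀ ε : ℝ, 0 < ε → ε ≤ 1 → (m - ε * B) * C ≤ A * ε) : False := by
  have hK : 0 < A + B * C + 1 := by positivity
  set ε := min 1 (m * C / (2 * (A + B * C + 1))) with hε
  have hε1 : ε ≤ 1 := min_le_left _ _
  have hε2 : ε ≤ m * C / (2 * (A + B * C + 1)) := min_le_right _ _
  have hε0 : 0 < ε := by
    apply lt_min one_pos
    positivity
  have := H ε hε0 hε1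
  rw [le_div_iff₀ (by positivity)] at hε2
  nlinarith

lemma norm_ofReal_mul (ε : ℝ) (x : ℂ) (h : 0 ≤ ε) : ‖(ε : ℂ) * x‖ = ε * ‖x‖ := by
  rw [norm_mul, Complex.norm_real, Real.norm_eq_abs, _root_.abs_of_nonneg h]

lemma delta_ne {b d w : ℂ} (hd : d ≠ 0) (hb' : ‖b‖ < ‖d‖) (hw : ‖w‖ < 1) :
    d - b * conj w ≠ 0 := by
  intro h0
  have h1 : d = b * conj w := by linear_combination h0
  have h2 : ‖d‖ = ‖b‖ * ‖w‖ := by rw [h1, norm_mul, RCLike.norm_conj]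
  nlinarith [norm_nonneg b, norm_nonneg d, norm_nonneg w]

lemma gamma_lt_delta {a b c d w : ℂ} (hdet : a * d - b * c ≠ 0)
    (hden : ∀ z : ℂ, ‖z‖ < 1 → c * z + d ≠ 0)
    (hself : ∀ z : ℂ, ‖z‖ < 1 → ‖(a * z + b) / (c * z + d)‖ < 1)
    (hw : ‖w‖ < 1) :
    ‖c - a * conj w‖ < ‖d - b * conj w‖ := by
  have hd : d ≠ 0 := by simpa using hden 0 (by norm_num)
  have hφ0 : ‖b / d‖ < 1 := by simpa using hself 0 (by norm_num)
  have hb' : ‖b‖ < ‖d‖ := by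
    rw [norm_div, div_lt_one (norm_pos_iff.mpr hd)] at hφ0
    exact hφ0
  set γ := c - a * conj w with hγdef
  set δ := d - b * conj w with hδdef
  have hwc : ‖conj w‖ < 1 := by rwa [RCLike.norm_conj]
  have hδ : δ ≠ 0 := delta_ne hd hb' hw
  have hδpos : 0 < ‖δ‖ := norm_pos_iff.mpr hδ
  have key : ∀ z : ℂ, ‖z‖ < 1 → ‖c * z + d‖ * (1 - ‖w‖) ≤ ‖γ * z + δ‖ := by
    intro z hz
    have hcz := hden z hz
    have hfz := hself z hz
    have hid : (c * z + d) * (1 - conj w * ((a * z + b) / (c * z + d))) = γ * z + δ := by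
      field_simp
      ring
    have hnorm1 : 1 - ‖w‖ ≤ ‖1 - conj w * ((a * z + b) / (c * z + d))‖ := by
      have h1 : ‖conj w * ((a * z + b) / (c * z + d))‖ ≤ ‖w‖ := by
        rw [norm_mul, RCLike.norm_conj]
        nlinarith [norm_nonneg w, norm_nonneg ((a * z + b) / (c * z + d))]
      have h2 := norm_sub_norm_le (1 : ℂ) (conj w * ((a * z + b) / (c * z + d)))
      simp only [norm_one] at h2
      linarith
    calc ‖c * z + d‖ * (1 - ‖w‖) ≤ ‖c * z + d‖ * ‖1 - conj w * ((a * z + b) / (c * z + d))‖ := by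
          have := norm_nonneg (c * z + d); nlinarith
    _ = ‖γ * z + δ‖ := by rw [← norm_mul, hid]
  by_contra hcon
  push_neg at hcon
  have hγ : γ ≠ 0 := by
    intro h0
    rw [h0] at hcon
    simp at hcon
    exact hδ hcon
  set s := -δ / γ with hs
  have hγpos : 0 < ‖γ‖ := norm_pos_iff.mpr hγ
  have hsle : ‖s‖ ≤ 1 := by
    rw [hs, norm_div, norm_neg, div_le_one hγpos]
    exact hcon
  have hs0 : s ≠ 0 := by
    rw [hs]
    exact div_ne_zero (neg_ne_zero.mpr hδ) hγ
  have hγs : γ * s = -δ := by rw [hs]; field_simp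
  have hz_eq : ∀ ε : ℝ, γ * (((1 - ε : ℝ) : ℂ) * s) + δ = (ε : ℂ) * δ := by
    intro ε
    have : γ * (((1 - ε : ℝ) : ℂ) * s) = ((1 - ε : ℝ) : ℂ) * (γ * s) := by ring
    rw [this, hγs]
    push_cast
    ring
  have hz_norm : ∀ ε : ℝ, 0 < ε → ε ≤ 1 → ‖((1 - ε : ℝ) : ℂ) * s‖ < 1 := by
    intro ε h0 h1
    rw [norm_ofReal_mul _ _ (by linarith)]
    nlinarith [norm_nonneg s]
  by_cases hcs : c * s + d = 0
  · have hc0 : c ≠ 0 := by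
      intro h0
      rw [h0] at hcs
      simp at hcs
      exact hd hcs
    have hs1 : ‖s‖ = 1 := by
      rcases lt_or_eq_of_le hsle with hlt | heq
      · exact absurd hcs (hden s hlt)
      · exact heq
    have hab : a * s + b ≠ 0 := by
      intro h0
      have hcomb : s * (a * d - b * c) = d * (a * s + b) - b * (c * s + d) := by ring
      rw [h0, hcs] at hcomb
      simp at hcomb
      rcases hcomb with h | h
      · exact hs0 h
      · exact hdet h
    refine eps_helper (A := ‖c‖) (B := ‖a‖) (C := 1) (m := ‖a * s + b‖)
      (norm_nonneg c) (norm_nonneg a) one_pos (norm_pos_iff.mpr hab) ?_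
    intro ε hε0 hε1
    set z := ((1 - ε : ℝ) : ℂ) * s with hzdef
    have hz1 : ‖z‖ < 1 := hz_norm ε hε0 hε1
    have hczd : c * z + d = -((ε : ℂ) * (c * s)) := by
      rw [hzdef]
      push_cast
      linear_combination hcs
    have hnorm_czd : ‖c * z + d‖ = ε * ‖c‖ := by
      rw [hczd, norm_neg, norm_ofReal_mul _ _ hε0.le, norm_mul, hs1, mul_one]
    have hfz := hself z hz1
    have hczd_ne : c * z + d ≠ 0 := hden z hz1
    rw [norm_div, div_lt_one (norm_pos_iff.mpr hczd_ne)] at hfz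
    have hazb : a * z + b = (a * s + b) - (ε : ℂ) * (a * s) := by
      rw [hzdef]; push_cast; ring
    have hlow : ‖a * s + b‖ - ε * ‖a‖ ≤ ‖a * z + b‖ := by
      have h2 := norm_sub_norm_le (a * s + b) ((ε : ℂ) * (a * s))
      rw [← hazb] at h2
      have h3 : ‖(ε : ℂ) * (a * s)‖ = ε * ‖a‖ := by
        rw [norm_ofReal_mul _ _ hε0.le, norm_mul, hs1, mul_one]
      linarith
    rw [hnorm_czd] at hfz
    nlinarith
  · refine eps_helper (A := ‖δ‖) (B := ‖c‖) (C := 1 - ‖w‖) (m := ‖c * s + d‖)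
      (norm_nonneg δ) (norm_nonneg c) (by linarith) (norm_pos_iff.mpr hcs) ?_
    intro ε hε0 hε1
    set z := ((1 - ε : ℝ) : ℂ) * s with hzdef
    have hz1 : ‖z‖ < 1 := hz_norm ε hε0 hε1
    have h1 := key z hz1
    rw [hz_eq ε] at h1
    have h2 : ‖(ε : ℂ) * δ‖ = ε * ‖δ‖ := norm_ofReal_mul _ _ hε0.le
    rw [h2] at h1
    have hczd : c * z + d = (c * s + d) - (ε : ℂ) * (c * s) := by
      rw [hzdef]; push_cast; ring
    have hlow : ‖c * s + d‖ - ε * ‖c‖ ≤ ‖c * z + d‖ := by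
      have h3 := norm_sub_norm_le (c * s + d) ((ε : ℂ) * (c * s))
      rw [← hczd] at h3
      have h4 : ‖(ε : ℂ) * (c * s)‖ ≤ ε * ‖c‖ := by
        rw [norm_ofReal_mul _ _ hε0.le, norm_mul]
        nlinarith [norm_nonneg c, hsle, hε0.le,
          mul_le_mul_of_nonneg_left hsle (mul_nonneg hε0.le (norm_nonneg c))]
      linarith
    nlinarith [mul_le_mul_of_nonneg_right hlow (by linarith : (0:ℝ) ≤ 1 - ‖w‖)]

end H2

/-- Lemma 2.3 (ii): for a linear fractional self-map `φ` and `w ∈ 𝔻` with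
`conj a * w ≠ conj c`,
`(J W_{ξ_p,τ_p}) C_φ* C_φ K_w (z) = conj (ξ_p (conj z)) *
  ( -conj c * (g(w)/σ(w)) * K_{conj (φ 0)}(conj (τ_p (conj z)))
    + conj (h (1 / conj (σ w))) * g(w) * K_{conj (φ (σ w))}(conj (τ_p (conj z))) )`. -/
theorem stmt3 (p lam a b c d w : ℂ)
    (hp : ‖p‖ < 1) (hp0 : p ≠ 0) (hlam : ‖lam‖ = 1) (hlp : lam * p = conj p)
    (φ : ℂ → ℂ) (hφ : ∀ z : ℂ, φ z = (a * z + b) / (c * z + d))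
    (hdet : a * d - b * c ≠ 0)
    (hden : ∀ z : ℂ, ‖z‖ < 1 → c * z + d ≠ 0)
    (hself : ∀ z : ℂ, ‖z‖ < 1 → ‖φ z‖ < 1)
    (σ : ℂ → ℂ) (hσ : ∀ z : ℂ, σ z = (conj a * z - conj c) / (-(conj b) * z + conj d))
    (g : ℂ → ℂ) (hg : ∀ z : ℂ, g z = 1 / (-(conj b) * z + conj d))
    (h : ℂ → ℂ) (hh : ∀ z : ℂ, h z = c * z + d)
    (hw : ‖w‖ < 1) (hwa : conj a * w ≠ conj c)
    (T : H2 →L[ℂ] H2) (hT : H2.IsCompOp φ T)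
    (C : H2 → H2) (hC : H2.IsConjugation C) (hCJ : H2.IsJW p lam C) :
    ∀ z : ℂ, ‖z‖ < 1 →
      H2.eval (C ((ContinuousLinearMap.adjoint T) (T (H2.kernel w)))) z
        = conj (H2.xi p (conj z)) *
            (-(conj c) * (g w / σ w) *
                H2.ker (conj (φ 0)) (conj (H2.tau p lam (conj z)))
              + conj (h (1 / conj (σ w))) * g w *
                H2.ker (conj (φ (σ w))) (conj (H2.tau p lam (conj z)))) := by
  intro z hz
  have hself' : ∀ x : ℂ, ‖x‖ < 1 → ‖(a * x + b) / (c * x + d)‖ < 1 := by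
    intro x hx
    rw [← hφ x]
    exact hself x hx
  have hd : d ≠ 0 := by simpa using hden 0 (by norm_num)
  have hφ0lt : ‖φ 0‖ < 1 := hself 0 (by norm_num)
  have hb' : ‖b‖ < ‖d‖ := by
    have h0 : ‖b / d‖ < 1 := by
      have := hself' 0 (by norm_num)
      simpa using this
    rw [norm_div, div_lt_one (norm_pos_iff.mpr hd)] at h0
    exact h0
  have hγ : c - a * conj w ≠ 0 := by
    intro h0
    apply hwa
    have h1 := congrArg conj h0
    simp only [map_sub, map_mul, Complex.conj_conj, map_zero] at h1
    linear_combination -h1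
  have hδ : d - b * conj w ≠ 0 := H2.delta_ne hd hb' hw
  have hγδ := H2.gamma_lt_delta hdet hden hself' hw
  have hcγ : conj a * w - conj c ≠ 0 := sub_ne_zero.mpr hwa
  have hcδ : -(conj b) * w + conj d ≠ 0 := by
    intro h0
    apply hδ
    have h1 := congrArg conj h0
    simp only [map_add, map_neg, map_mul, Complex.conj_conj, map_zero] at h1
    linear_combination h1
  have hconjσ : conj (σ w) = -(c - a * conj w) / (d - b * conj w) := by
    rw [hσ w, map_div₀]
    simp only [map_sub, map_mul, map_add, map_neg, Complex.conj_conj]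
    rw [div_eq_div_iff (by intro h0; apply hδ; linear_combination h0) hδ]
    ring
  have hσlt : ‖σ w‖ < 1 := by
    rw [← RCLike.norm_conj, hconjσ, norm_div, norm_neg,
      div_lt_one (norm_pos_iff.mpr hδ)]
    exact hγδ
  have hσne : σ w ≠ 0 := by
    intro h0
    rw [h0, map_zero] at hconjσ
    have h1 : c - a * conj w = 0 := by
      rcases div_eq_zero_iff.mp hconjσ.symm with h | h
      · linear_combination -h
      · exact absurd h hδ
    exact hγ h1
  have hφσlt : ‖φ (σ w)‖ < 1 := hself (σ w) hσlt
  have hu : ‖H2.tau p lam (conj z)‖ < 1 := by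
    rw [H2.tau]
    exact H2.norm_tau_lt_one hp hlam (by rwa [RCLike.norm_conj])
  set u := H2.tau p lam (conj z) with hudef
  set β : ℂ := (d * (c - a * conj w) - c * (d - b * conj w)) /
      ((c - a * conj w) * (d - b * conj w)) with hβdef
  have hTK : T (H2.kernel w) = (c / (c - a * conj w)) • H2.kernel 0 + β • H2.kernel (σ w) := by
    apply H2.ext_of_eval
    intro x hx
    rw [hT _ x hx, H2.eval_kernel hw (hself x hx), H2.eval_add _ _ hx, H2.eval_smul,
      H2.eval_smul, H2.eval_kernel (by norm_num) hx, H2.eval_kernel hσlt hx]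
    rw [hφ x, hconjσ, hβdef]
    have h1 : c * x + d ≠ 0 := hden x hx
    have h2 : (1 : ℂ) - conj w * ((a * x + b) / (c * x + d)) ≠ 0 := by
      apply H2.one_sub_ne hw
      rw [← hφ x]
      exact hself x hx
    have h3 : (1 : ℂ) - -(c - a * conj w) / (d - b * conj w) * x ≠ 0 := by
      rw [← hconjσ]
      exact H2.one_sub_ne hσlt hx
    simp only [map_zero, zero_mul, sub_zero, inv_one, mul_one]
    have h4 : (c - a * conj w) * x + (d - b * conj w) ≠ 0 := by
      have e : ((c - a * conj w) * x + (d - b * conj w))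
          = (c * x + d) * (1 - conj w * ((a * x + b) / (c * x + d))) := by
        rw [show (c * x + d) * (1 - conj w * ((a * x + b) / (c * x + d)))
            = (c * x + d) - conj w * ((a * x + b) / (c * x + d) * (c * x + d)) by ring,
          div_mul_cancel₀ _ h1]
        ring
      rw [e]
      exact mul_ne_zero h1 h2
    have eL : 1 - conj w * ((a * x + b) / (c * x + d))
        = ((c - a * conj w) * x + (d - b * conj w)) / (c * x + d) := by
      rw [eq_div_iff h1, sub_mul, one_mul, mul_assoc, div_mul_cancel₀ _ h1]
      ring
    have eR : 1 - -(c - a * conj w) / (d - b * conj w) * x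
        = ((c - a * conj w) * x + (d - b * conj w)) / (d - b * conj w) := by
      rw [eq_div_iff hδ, sub_mul, one_mul, mul_right_comm, div_mul_cancel₀ _ hδ]
      ring
    rw [eL, eR, inv_div, inv_div]
    have hδ2 : -((conj w) * b) + d ≠ 0 := by
      intro h0
      apply hδ
      linear_combination h0
    have hγ2 : c - (conj w) * a ≠ 0 := by
      intro h0
      apply hγ
      linear_combination h0
    rw [div_mul_div_comm, div_add_div _ _ hγ (mul_ne_zero (mul_ne_zero hγ hδ) h4),
      div_eq_div_iff h4 (mul_ne_zero hγ (mul_ne_zero (mul_ne_zero hγ hδ) h4))]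
    ring
  have hTT : (ContinuousLinearMap.adjoint T) (T (H2.kernel w))
      = (c / (c - a * conj w)) • H2.kernel (φ 0) + β • H2.kernel (φ (σ w)) := by
    rw [hTK, map_add, map_smul, map_smul,
      H2.adjoint_kernel hT hself (by norm_num), H2.adjoint_kernel hT hself hσlt]
  rw [hCJ _ z hz, hTT, H2.eval_add _ _ hu, H2.eval_smul, H2.eval_smul,
    H2.eval_kernel hφ0lt hu, H2.eval_kernel hφσlt hu, map_mul]
  congr 1
  have hcγ' : conj c - conj a * w ≠ 0 := by
    intro h0
    apply hcγ
    linear_combination -h0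
  have hcδ' : conj d - conj b * w ≠ 0 := by
    intro h0
    apply hcδ
    linear_combination h0
  have e1 : H2.ker (conj (φ 0)) (conj u) = conj ((1 - conj (φ 0) * u)⁻¹) := by
    simp [H2.ker]
  have e2 : H2.ker (conj (φ (σ w))) (conj u) = conj ((1 - conj (φ (σ w)) * u)⁻¹) := by
    simp [H2.ker]
  have key1 : ∀ X Y : ℂ, X ≠ 0 → Y ≠ 0 →
      -(conj c) * ((1 / Y) / (X / Y)) = conj c / -X := by
    intro X Y hX hY
    field_simp
  have key2 : ∀ X Y : ℂ, X ≠ 0 → Y ≠ 0 →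
      (conj c * (1 / (X / Y)) + conj d) * (1 / Y)
        = (conj d * -X - conj c * Y) / (-X * Y) := by
    intro X Y hX hY
    rw [one_div_div]
    field_simp
    ring
  have c1 : -(conj c) * (g w / σ w) = conj (c / (c - a * conj w)) := by
    rw [hg w, hσ w, map_div₀]
    simp only [map_sub, map_mul, Complex.conj_conj]
    rw [show conj c - conj a * w = -(conj a * w - conj c) from by ring]
    exact key1 _ _ hcγ hcδ
  have c2 : conj (h (1 / conj (σ w))) * g w = conj β := by
    rw [hh, hβdef, hg w, hσ w]
    simp only [map_add, map_mul, map_one, map_div₀, map_sub, Complex.conj_conj]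
    rw [show conj c - conj a * w = -(conj a * w - conj c) from by ring,
      show conj d - conj b * w = -(conj b) * w + conj d from by ring]
    exact key2 _ _ hcγ hcδ
  rw [e1, e2, c1, c2, ← map_mul, ← map_mul, ← map_add]
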